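/- In particular, for i.i.d. X_1,...,X_n with E[|X_1|^\alpha] < \infty for some \alpha \in (1,2), the expected Wasserstein-1 distance between the empirical distribution and the true distribution tends to 0 as n \to \infty. -/

import Mathlib

open MeasureTheory ProbabilityTheory Filter Topology
open scoped ENNReal NNReal

noncomputable def cdfFun (μ : Measure ℝ) (x : ℝ) : ℝ := (μ (Set.Iic x)).toReal

noncomputable def empCDF {Ω : Type*} (n : ℕ) (X : ℕ → Ω → ℝ) (ω : Ω) (x : ℝ) : ℝ :=
  (1 / n : ℝ) * ∑ i ∈ Finset.range n, (if X i ω ≤ x then (1 : ℝ) else 0)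

section Aux

/-- The dominating function `min 2 (2M |x|^(-α))` is integrable when `α > 1`. -/
lemma aux_dominator_integrable {M α : ℝ} (hM : 0 ≤ M) (hα1 : 1 < α) :
    Integrable (fun x : ℝ => min 2 (2 * M * |x| ^ (-α))) := by
  set g : ℝ → ℝ := fun x => min 2 (2 * M * |x| ^ (-α)) with hg
  have hgmeas : Measurable g :=
    measurable_const.min ((measurable_abs.pow measurable_const).const_mul _)
  have hgnonneg : ∀ x, 0 ≤ g x := by
    intro x
    apply le_min (by norm_num)
    positivity
  have hIoi : IntegrableOn (fun y : ℝ => 2 * M * y ^ (-α)) (Set.Ioi (1:ℝ)) :=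
    (integrableOn_Ioi_rpow_of_lt (by linarith) one_pos).const_mul (2 * M)
  have hgIoi : IntegrableOn g (Set.Ioi (1:ℝ)) := by
    apply Integrable.mono' hIoi hgmeas.aestronglyMeasurable
    filter_upwards [ae_restrict_mem measurableSet_Ioi] with y hy
    rw [Real.norm_eq_abs, abs_of_nonneg (hgnonneg y)]
    refine (min_le_right _ _).trans ?_
    rw [abs_of_pos (lt_trans one_pos hy)]
  have hgIci : IntegrableOn g (Set.Ici (1:ℝ)) := by
    rwa [integrableOn_Ici_iff_integrableOn_Ioi]
  have hgIic : IntegrableOn g (Set.Iic (-1:ℝ)) := by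
    have heq : Set.Iic (-1:ℝ) = Neg.neg ⁻¹' (Set.Ici (1:ℝ)) := by
      ext y; simp [le_neg]
    rw [heq]
    rw [← (Measure.measurePreserving_neg (volume : Measure ℝ)).integrableOn_comp_preimage
        (Homeomorph.neg ℝ).measurableEmbedding] at hgIci
    have : g ∘ Neg.neg = g := by
      funext y; simp only [Function.comp_apply, g, abs_neg]
    rwa [this] at hgIci
  have hgIcc : IntegrableOn g (Set.Icc (-1:ℝ) 1) := by
    apply Integrable.mono' (integrableOn_const (C := (2:ℝ)) (by simp) (by simp))
      hgmeas.aestronglyMeasurable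
    filter_upwards with y
    rw [Real.norm_eq_abs, abs_of_nonneg (hgnonneg y)]
    exact min_le_left _ _
  rw [← integrableOn_univ]
  apply IntegrableOn.mono_set ((hgIic.union hgIcc).union hgIoi)
  intro x _
  rcases le_or_gt x (-1) with h | h
  · exact Or.inl (Or.inl h)
  rcases le_or_gt x 1 with h' | h'
  · exact Or.inl (Or.inr ⟨h.le, h'⟩)
  · exact Or.inr h'

end Aux

set_option maxHeartbeats 1000000 in
/-- For i.i.d. `X_i` with `E[|X₁|^α] < ∞` for some `α ∈ (1,2)`, the expected
Wasserstein-1 distance `E[d₁(F_n, F)] = E[∫ |F_n(x) - F(x)| dx]` between the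
empirical distribution and the true distribution tends to `0` as `n → ∞`. -/
theorem stmt6 {Ω : Type*} [MeasurableSpace Ω] (P : Measure Ω) [IsProbabilityMeasure P]
    (X : ℕ → Ω → ℝ) (hmeas : ∀ i, Measurable (X i))
    (hindep : iIndepFun X P)
    (hident : ∀ i, P.map (X i) = P.map (X 0))
    (α : ℝ) (hα1 : 1 < α) (hα2 : α < 2)
    (hmom : Integrable (fun ω => |X 0 ω| ^ α) P) :
    Tendsto (fun n => ∫ ω, (∫ x, |empCDF n X ω x - cdfFun (P.map (X 0)) x|) ∂P)
      atTop (nhds 0) := by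
  classical
  set μ : Measure ℝ := P.map (X 0) with hμdef
  haveI hμprob : IsProbabilityMeasure μ := Measure.isProbabilityMeasure_map (hmeas 0).aemeasurable
  set F : ℝ → ℝ := cdfFun μ with hFdef
  have hFnonneg : ∀ x, 0 ≤ F x := fun x => ENNReal.toReal_nonneg
  have hFle1 : ∀ x, F x ≤ 1 := by
    intro x
    have h1 : μ (Set.Iic x) ≤ 1 := prob_le_one
    have := ENNReal.toReal_mono ENNReal.one_ne_top h1
    exact this
  have hFmono : Monotone F := by
    intro a b hab
    exact ENNReal.toReal_mono (measure_ne_top _ _)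
      (measure_mono (Set.Iic_subset_Iic.2 hab))
  have hFmeas : Measurable F := hFmono.measurable
  -- indicator variables
  set Y : ℕ → ℝ → Ω → ℝ := fun i x ω => if X i ω ≤ x then 1 else 0 with hYdef
  have hYind : ∀ i x, Y i x = fun ω =>
      Set.indicator (X i ⁻¹' Set.Iic x) (fun _ => (1:ℝ)) ω := by
    intro i x; funext ω
    simp [Y, Set.indicator_apply, Set.mem_Iic]
  have hYmeas : ∀ i x, Measurable (Y i x) := by
    intro i x
    rw [hYind]
    exact (measurable_const.indicator ((hmeas i) measurableSet_Iic))
  have hYint : ∀ i x, Integrable (Y i x) P := by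
    intro i x
    rw [hYind]
    exact (integrable_const (1:ℝ)).indicator ((hmeas i) measurableSet_Iic)
  have hYmean : ∀ i x, ∫ ω, Y i x ω ∂P = F x := by
    intro i x
    rw [hYind]
    rw [integral_indicator_const (1:ℝ) ((hmeas i) measurableSet_Iic)]
    have : P (X i ⁻¹' Set.Iic x) = μ (Set.Iic x) := by
      rw [← hident i, Measure.map_apply (hmeas i) measurableSet_Iic]
    rw [measureReal_def, this]
    simp [F, cdfFun]
  have hYnonneg : ∀ i x ω, 0 ≤ Y i x ω := by
    intro i x ω; by_cases h : X i ω ≤ x <;> simp [Y, h]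
  have hYle1 : ∀ i x ω, Y i x ω ≤ 1 := by
    intro i x ω; by_cases h : X i ω ≤ x <;> simp [Y, h]
  -- rewrite of empCDF
  have hemp_eq : ∀ n x ω, empCDF n X ω x = (n:ℝ)⁻¹ * ∑ i ∈ Finset.range n, Y i x ω := by
    intro n x ω
    simp [empCDF, one_div, Y]
  have hempInt0 : ∀ n x, Integrable (fun ω => empCDF n X ω x) P := by
    intro n x
    have : (fun ω => empCDF n X ω x)
        = fun ω => (n:ℝ)⁻¹ * ∑ i ∈ Finset.range n, Y i x ω := by
      funext ω; exact hemp_eq n x ω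
    rw [this]
    exact (integrable_finset_sum _ (fun i _ => hYint i x)).const_mul _
  have hempint : ∀ n x, Integrable (fun ω => |empCDF n X ω x - F x|) P :=
    fun n x => ((hempInt0 n x).sub (integrable_const _)).abs
  have hempnonneg : ∀ n x ω, 0 ≤ empCDF n X ω x := by
    intro n x ω
    rw [hemp_eq]
    exact mul_nonneg (by positivity) (Finset.sum_nonneg fun i _ => hYnonneg i x ω)
  have hemple1 : ∀ n x ω, empCDF n X ω x ≤ 1 := by
    intro n x ω
    rw [hemp_eq]
    rcases Nat.eq_zero_or_pos n with h | h
    · simp [h]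
    have hsum : ∑ i ∈ Finset.range n, Y i x ω ≤ (n:ℝ) := by
      calc ∑ i ∈ Finset.range n, Y i x ω ≤ ∑ _i ∈ Finset.range n, (1:ℝ) :=
            Finset.sum_le_sum fun i _ => hYle1 i x ω
        _ = n := by simp
    calc (n:ℝ)⁻¹ * ∑ i ∈ Finset.range n, Y i x ω ≤ (n:ℝ)⁻¹ * n := by
          apply mul_le_mul_of_nonneg_left hsum (by positivity)
      _ = 1 := by
          field_simp
  have hempmean : ∀ n x, 1 ≤ n → ∫ ω, empCDF n X ω x ∂P = F x := by
    intro n x hn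
    have h1 : (fun ω => empCDF n X ω x)
        = fun ω => (n:ℝ)⁻¹ * ∑ i ∈ Finset.range n, Y i x ω := by
      funext ω; exact hemp_eq n x ω
    rw [h1, integral_const_mul, integral_finset_sum _ (fun i _ => hYint i x)]
    simp only [hYmean]
    rw [Finset.sum_const, Finset.card_range, nsmul_eq_mul, ← mul_assoc]
    have hne : (n:ℝ) ≠ 0 := Nat.cast_ne_zero.2 (by omega)
    field_simp
  -- the key lintegral quantity
  set h : ℕ → ℝ → ℝ≥0∞ :=
    fun n x => ∫⁻ ω, ENNReal.ofReal |empCDF n X ω x - F x| ∂P with hhdef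
  -- pointwise (in x) convergence of h n x to 0, from the Lᵖ law of large numbers
  have hpt : ∀ x, Tendsto (fun n => h n x) atTop (𝓝 0) := by
    intro x
    set φ : ℝ → ℝ := (Set.Iic x).indicator (fun _ => (1:ℝ)) with hφdef
    have hφmeas : Measurable φ := measurable_const.indicator measurableSet_Iic
    have hφcomp : ∀ i, φ ∘ X i = Y i x := by
      intro i; funext ω
      simp [φ, Set.indicator_apply, Set.mem_Iic, Y]
    have hident' : ∀ i, IdentDistrib (Y i x) (Y 0 x) P P := by
      intro i
      have hXid : IdentDistrib (X i) (X 0) P P :=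
        ⟨(hmeas i).aemeasurable, (hmeas 0).aemeasurable, hident i⟩
      have := hXid.comp hφmeas
      rwa [hφcomp i, hφcomp 0] at this
    have hindep' : Pairwise (Function.onFun (IndepFun · · P) fun i => Y i x) := by
      intro i j hij
      have := (hindep.indepFun hij).comp hφmeas hφmeas
      simp only [Function.onFun]
      rwa [hφcomp i, hφcomp j] at this
    have hsl := strong_law_Lp (μ := P) le_rfl ENNReal.one_ne_top (fun i => Y i x)
      (memLp_one_iff_integrable.2 (hYint 0 x)) hindep' hident'
    refine Tendsto.congr (fun n => ?_) hsl
    rw [eLpNorm_one_eq_lintegral_enorm]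
    simp only [hhdef]
    rw [hYmean 0 x]
    apply lintegral_congr
    intro ω
    rw [Real.enorm_eq_ofReal_abs]
    congr 2
    rw [hemp_eq n x ω, smul_eq_mul]
  -- h n x as ofReal of a Bochner integral
  have hh_eq : ∀ n x, h n x = ENNReal.ofReal (∫ ω, |empCDF n X ω x - F x| ∂P) := by
    intro n x
    simp only [hhdef]
    rw [ofReal_integral_eq_lintegral_ofReal (hempint n x)
      (ae_of_all _ fun ω => abs_nonneg _)]
  -- uniform bound by 2 * min (F x) (1 - F x) for n ≥ 1
  have hbound : ∀ n x, 1 ≤ n → h n x ≤ ENNReal.ofReal (2 * min (F x) (1 - F x)) := by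
    intro n x hn
    rw [hh_eq]
    apply ENNReal.ofReal_le_ofReal
    have hmean := hempmean n x hn
    have hInt1 : Integrable (fun ω => empCDF n X ω x + F x) P :=
      (hempInt0 n x).add (integrable_const _)
    have hInt2 : Integrable (fun ω => (1 - empCDF n X ω x) + (1 - F x)) P :=
      ((integrable_const (1:ℝ)).sub (hempInt0 n x)).add (integrable_const _)
    have h1 : ∫ ω, |empCDF n X ω x - F x| ∂P ≤ 2 * F x := by
      have hle : ∀ ω, |empCDF n X ω x - F x| ≤ empCDF n X ω x + F x := by
        intro ω
        have := abs_sub (empCDF n X ω x) (F x)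
        rw [abs_of_nonneg (hempnonneg n x ω), abs_of_nonneg (hFnonneg x)] at this
        exact this
      calc ∫ ω, |empCDF n X ω x - F x| ∂P ≤ ∫ ω, (empCDF n X ω x + F x) ∂P :=
            integral_mono (hempint n x) hInt1 hle
        _ = 2 * F x := by
            rw [integral_add (hempInt0 n x) (integrable_const _), hmean,
              integral_const, probReal_univ]
            simp; ring
    have h2 : ∫ ω, |empCDF n X ω x - F x| ∂P ≤ 2 * (1 - F x) := by
      have hle : ∀ ω, |empCDF n X ω x - F x| ≤ (1 - empCDF n X ω x) + (1 - F x) := by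
        intro ω
        rw [abs_sub_le_iff]
        constructor
        · have := hemple1 n x ω; have := hFnonneg x; linarith
        · have := hempnonneg n x ω; have := hFle1 x; linarith
      calc ∫ ω, |empCDF n X ω x - F x| ∂P
            ≤ ∫ ω, ((1 - empCDF n X ω x) + (1 - F x)) ∂P :=
            integral_mono (hempint n x) hInt2 hle
        _ = 2 * (1 - F x) := by
            have e : (fun ω => (1 - empCDF n X ω x) + (1 - F x))
                = fun ω => (2 - F x) - empCDF n X ω x := by
              funext ω; ring
            rw [e, integral_sub (integrable_const _) (hempInt0 n x), hmean,
              integral_const, probReal_univ]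
            simp; ring
    have : 2 * min (F x) (1 - F x) = min (2 * F x) (2 * (1 - F x)) := by
      rcases le_total (F x) (1 - F x) with hc | hc
      · rw [min_eq_left hc, min_eq_left (by linarith)]
      · rw [min_eq_right hc, min_eq_right (by linarith)]
    rw [this]
    exact le_min h1 h2
  -- the integrable dominator
  set M : ℝ := ∫ ω, |X 0 ω| ^ α ∂P with hMdef
  have hMnonneg : 0 ≤ M := integral_nonneg fun ω => Real.rpow_nonneg (abs_nonneg _) _
  set g : ℝ → ℝ := fun x => min 2 (2 * M * |x| ^ (-α)) with hgdef
  have hgint : Integrable g := aux_dominator_integrable hMnonneg hα1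
  have hgnonneg : ∀ x, 0 ≤ g x := by
    intro x
    apply le_min (by norm_num)
    positivity
  have hming : ∀ x : ℝ, x ≠ 0 → 2 * min (F x) (1 - F x) ≤ g x := by
    intro x hx
    apply le_min
    · have h1 := min_le_left (F x) (1 - F x)
      have := hFle1 x
      linarith
    · have hax : 0 < |x| := abs_pos.2 hx
      have hεpos : 0 < |x| ^ α := Real.rpow_pos_of_pos hax α
      have hmarkov := mul_meas_ge_le_integral_of_nonneg
        (ae_of_all _ fun ω => Real.rpow_nonneg (abs_nonneg (X 0 ω)) α) hmom (|x| ^ α)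
      set S : Set Ω := {ω | |x| ^ α ≤ |X 0 ω| ^ α} with hSdef
      have hPS : (P S).toReal ≤ M / |x| ^ α := by
        rw [le_div_iff₀ hεpos, mul_comm]
        exact hmarkov
      have key : min (F x) (1 - F x) ≤ M / |x| ^ α := by
        rcases hx.lt_or_gt with hneg | hpos
        · refine (min_le_left _ _).trans ?_
          have hsub : X 0 ⁻¹' Set.Iic x ⊆ S := by
            intro ω hω
            simp only [Set.mem_preimage, Set.mem_Iic] at hω
            have h1 : |x| ≤ |X 0 ω| := by
              rw [abs_of_neg hneg]
              calc -x ≤ -(X 0 ω) := by linarith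
                _ ≤ |X 0 ω| := neg_le_abs _
            exact Real.rpow_le_rpow (abs_nonneg x) h1 (by linarith)
          have hFx : F x = (P (X 0 ⁻¹' Set.Iic x)).toReal := by
            simp only [hFdef, cdfFun, hμdef]
            rw [Measure.map_apply (hmeas 0) measurableSet_Iic]
          rw [hFx]
          exact (ENNReal.toReal_mono (measure_ne_top _ _) (measure_mono hsub)).trans hPS
        · refine (min_le_right _ _).trans ?_
          have hsub : X 0 ⁻¹' Set.Ioi x ⊆ S := by
            intro ω hω
            simp only [Set.mem_preimage, Set.mem_Ioi] at hω
            have h1 : |x| ≤ |X 0 ω| := by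
              rw [abs_of_pos hpos]
              exact (le_of_lt hω).trans (le_abs_self _)
            exact Real.rpow_le_rpow (abs_nonneg x) h1 (by linarith)
          have h1F : 1 - F x = (P (X 0 ⁻¹' Set.Ioi x)).toReal := by
            have hc : μ (Set.Ioi x) = 1 - μ (Set.Iic x) := by
              rw [← Set.compl_Iic]
              exact prob_compl_eq_one_sub measurableSet_Iic
            have : (μ (Set.Ioi x)).toReal = 1 - F x := by
              rw [hc, ENNReal.toReal_sub_of_le prob_le_one ENNReal.one_ne_top,
                ENNReal.toReal_one]
              rfl
            rw [← this, hμdef, Measure.map_apply (hmeas 0) measurableSet_Ioi]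
          rw [h1F]
          exact (ENNReal.toReal_mono (measure_ne_top _ _) (measure_mono hsub)).trans hPS
      calc 2 * min (F x) (1 - F x) ≤ 2 * (M / |x| ^ α) := by linarith
        _ = 2 * M * |x| ^ (-α) := by
            rw [Real.rpow_neg (abs_nonneg x)]
            ring
  -- joint measurability
  have hjointR : ∀ n, Measurable (fun p : ℝ × Ω => |empCDF n X p.2 p.1 - F p.1|) := by
    intro n
    have hempjoint : Measurable (fun p : ℝ × Ω => empCDF n X p.2 p.1) := by
      simp only [empCDF]
      apply Measurable.const_mul
      apply Finset.measurable_sum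
      intro i _
      have hset : MeasurableSet {p : ℝ × Ω | X i p.2 ≤ p.1} :=
        measurableSet_le ((hmeas i).comp measurable_snd) measurable_fst
      exact Measurable.ite hset measurable_const measurable_const
    exact (hempjoint.sub (hFmeas.comp measurable_fst)).abs
  have hjoint : ∀ n, Measurable (fun p : ℝ × Ω =>
      ENNReal.ofReal |empCDF n X p.2 p.1 - F p.1|) :=
    fun n => (hjointR n).ennreal_ofReal
  have hjointR' : ∀ n, Measurable (fun p : Ω × ℝ => |empCDF n X p.1 p.2 - F p.2|) := by
    intro n
    have hempjoint : Measurable (fun p : Ω × ℝ => empCDF n X p.1 p.2) := by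
      simp only [empCDF]
      apply Measurable.const_mul
      apply Finset.measurable_sum
      intro i _
      have hset : MeasurableSet {p : Ω × ℝ | X i p.1 ≤ p.2} :=
        measurableSet_le ((hmeas i).comp measurable_fst) measurable_snd
      exact Measurable.ite hset measurable_const measurable_const
    exact (hempjoint.sub (hFmeas.comp measurable_snd)).abs
  have hjoint' : ∀ n, Measurable (fun p : Ω × ℝ =>
      ENNReal.ofReal |empCDF n X p.1 p.2 - F p.2|) :=
    fun n => (hjointR' n).ennreal_ofReal
  have hhx_meas : ∀ n, Measurable (fun x => h n x) := by
    intro n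
    simp only [hhdef]
    exact (hjoint n).lintegral_prod_right'
  -- finiteness of the dominator's lintegral
  have hgbound_fin : (∫⁻ x, ENNReal.ofReal (g x)) ≠ ⊤ := by
    have := (hasFiniteIntegral_iff_ofReal (ae_of_all _ hgnonneg)).1 hgint.hasFiniteIntegral
    exact this.ne
  have hae0 : ∀ᵐ (x : ℝ), x ≠ (0:ℝ) := by
    have hset : {x : ℝ | ¬ x ≠ 0} = {0} := by ext y; simp
    rw [ae_iff, hset]
    exact measure_singleton 0
  have hbd : ∀ n : ℕ, (fun x => h (n+1) x) ≤ᵐ[volume] fun x => ENNReal.ofReal (g x) := by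
    intro n
    filter_upwards [hae0] with x hx
    exact (hbound (n+1) x (by omega)).trans (ENNReal.ofReal_le_ofReal (hming x hx))
  -- dominated convergence
  have hT : Tendsto (fun n => ∫⁻ x, h (n+1) x) atTop (𝓝 0) := by
    have hlim : ∀ᵐ (x : ℝ), Tendsto (fun n : ℕ => h (n+1) x) atTop
        (𝓝 ((fun _ : ℝ => (0:ℝ≥0∞)) x)) :=
      ae_of_all _ fun x => (hpt x).comp (tendsto_add_atTop_nat 1)
    have := tendsto_lintegral_of_dominated_convergence (μ := volume)
      (fun x => ENNReal.ofReal (g x)) (fun n => hhx_meas (n+1)) hbd hgbound_fin hlim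
    simpa using this
  have hTfin : ∀ n : ℕ, (∫⁻ x, h (n+1) x) ≠ ⊤ := by
    intro n
    exact ((lintegral_mono_ae (hbd n)).trans_lt (lt_top_iff_ne_top.2 hgbound_fin)).ne
  -- identify the Bochner double integral with the lintegral
  have hAeq : ∀ n : ℕ, (∫ ω, (∫ x, |empCDF (n+1) X ω x - F x|) ∂P)
      = (∫⁻ x, h (n+1) x).toReal := by
    intro n
    set m := n + 1 with hm
    have hu0 : Measurable (fun p : Ω × ℝ => ENNReal.ofReal |empCDF m X p.1 p.2 - F p.2|) :=
      hjoint' m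
    have hu : AEMeasurable
        (Function.uncurry fun ω x => ENNReal.ofReal |empCDF m X ω x - F x|)
        (P.prod (volume : Measure ℝ)) := hu0.aemeasurable
    have hswap : ∫⁻ ω, ∫⁻ x, ENNReal.ofReal |empCDF m X ω x - F x| ∂volume ∂P
        = ∫⁻ x, h m x :=
      lintegral_lintegral_swap (μ := P) (ν := volume)
        (f := fun ω x => ENNReal.ofReal |empCDF m X ω x - F x|) hu
    have homeas : Measurable (fun ω =>
        ∫⁻ x, ENNReal.ofReal |empCDF m X ω x - F x| ∂volume) :=
      hu0.lintegral_prod_right'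
    have hfin : (∫⁻ ω, (∫⁻ x, ENNReal.ofReal |empCDF m X ω x - F x| ∂volume) ∂P) ≠ ⊤ := by
      rw [hswap]; exact hTfin n
    have hinner : ∀ ω, (∫ x, |empCDF m X ω x - F x|)
        = (∫⁻ x, ENNReal.ofReal |empCDF m X ω x - F x| ∂volume).toReal := by
      intro ω
      exact integral_eq_lintegral_of_nonneg_ae (ae_of_all _ fun x => abs_nonneg _)
        (((hjointR m).comp (measurable_id.prodMk measurable_const)).aestronglyMeasurable)
    calc (∫ ω, (∫ x, |empCDF m X ω x - F x|) ∂P)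
        = ∫ ω, (∫⁻ x, ENNReal.ofReal |empCDF m X ω x - F x| ∂volume).toReal ∂P :=
          integral_congr_ae (ae_of_all _ fun ω => hinner ω)
      _ = (∫⁻ ω, (∫⁻ x, ENNReal.ofReal |empCDF m X ω x - F x| ∂volume) ∂P).toReal :=
          integral_toReal homeas.aemeasurable (ae_lt_top homeas hfin)
      _ = (∫⁻ x, h m x).toReal := by rw [hswap]
  -- conclude
  have hfinal : Tendsto (fun n : ℕ => ∫ ω, (∫ x, |empCDF (n+1) X ω x - F x|) ∂P)
      atTop (𝓝 0) := by
    rw [funext hAeq]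
    have := (ENNReal.tendsto_toReal (a := 0) (by simp)).comp hT
    exact this
  exact (tendsto_add_atTop_iff_nat 1).mp hfinal
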